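/- Let A be a symmetric positive-definite 3×3 real matrix with μ_A < 0 (elliptic flow), S := A⁻¹J(A−I), and M̃ the associated symbol. Then every plane-wave solution of the linearised semi-geostrophic equation is bounded: for every a₀ ∈ ℝ and k₀ ∈ ℝ³ \ {0} there exists a constant C such that |a₀ M̃(t;k₀)| · |e^{−tSᵀ}k₀| ≤ C for all t ∈ ℝ. Hence the quadratic steady solution P̄(x) = ½ x·Ax is stable to plane-wave perturbations. -/

import Mathlib

open Matrix MeasureTheory Real

/-- The Coriolis-type matrix `J`. -/
noncomputable def Jmat : Matrix (Fin 3) (Fin 3) ℝ := !![0, -1, 0; 1, 0, 0; 0, 0, 0]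

/-- The matrix `S := A⁻¹ J (A − I)`. -/
noncomputable def Smat (A : Matrix (Fin 3) (Fin 3) ℝ) : Matrix (Fin 3) (Fin 3) ℝ :=
  A⁻¹ * Jmat * (A - 1)



lemma Jmat_transpose : Jmatᵀ = -Jmat := by
  ext i j; fin_cases i <;> fin_cases j <;>
    simp [Jmat, Matrix.vecHead, Matrix.vecTail]

set_option maxHeartbeats 2000000 in
lemma cube_id (a b c d e f : ℝ) (A : Matrix (Fin 3) (Fin 3) ℝ)
    (hA : A = !![a, b, c; b, d, e; c, e, f]) :
    A.adjugate * Jmat * (A - 1) * (A.adjugate * Jmat * (A - 1)) * (A.adjugate * Jmat * (A - 1))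
      = ((a * f - c ^ 2 + d * f - e ^ 2 - f - A.det) * A.det) •
        (A.adjugate * Jmat * (A - 1)) := by
  subst hA
  have h1 : (!![a, b, c; b, d, e; c, e, f] - 1 : Matrix (Fin 3) (Fin 3) ℝ)
      = !![a - 1, b, c; b, d - 1, e; c, e, f - 1] := by
    ext i j; fin_cases i <;> fin_cases j <;>
      simp [Matrix.sub_apply, Matrix.one_apply]
  rw [Matrix.adjugate_fin_three, Matrix.det_fin_three, h1]
  simp only [Jmat, Matrix.mul_fin_three]
  ext i j
  fin_cases i <;> fin_cases j <;> simp [Matrix.smul_apply] <;> ring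

-- N := -(Smat A)ᵀ cube identity
lemma Ncube (a b c d e f μ : ℝ) (A : Matrix (Fin 3) (Fin 3) ℝ)
    (hA : A = !![a, b, c; b, d, e; c, e, f])
    (hdet : A.det ≠ 0)
    (hμ : μ = a * f - c ^ 2 + d * f - e ^ 2 - f - A.det) :
    (-(Smat A)ᵀ) * (-(Smat A)ᵀ) * (-(Smat A)ᵀ) = (μ / A.det) • (-(Smat A)ᵀ) := by
  set M : Matrix (Fin 3) (Fin 3) ℝ := A.adjugate * Jmat * (A - 1) with hM
  have hS : Smat A = (A.det)⁻¹ • M := by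
    rw [Smat, Matrix.inv_def, Ring.inverse_eq_inv, Matrix.smul_mul, Matrix.smul_mul]
  have hN : (-(Smat A)ᵀ) = (-(A.det)⁻¹) • Mᵀ := by
    rw [hS, Matrix.transpose_smul, neg_smul]
  have hMc : M * M * M = (μ * A.det) • M := by
    rw [hμ]; exact cube_id a b c d e f A hA
  have hMTc : Mᵀ * Mᵀ * Mᵀ = (μ * A.det) • Mᵀ := by
    rw [← Matrix.transpose_mul, ← Matrix.transpose_mul,
      show M * (M * M) = M * M * M from (Matrix.mul_assoc M M M).symm, hMc,
      Matrix.transpose_smul]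
  rw [hN]
  simp only [smul_mul_assoc, mul_smul_comm, smul_smul]
  rw [hMTc, smul_smul]
  congr 1
  field_simp

-- key skew identity
lemma skew_key (A : Matrix (Fin 3) (Fin 3) ℝ) (hAT : Aᵀ = A) (hdet : IsUnit A.det) :
    (A⁻¹ * (-(Smat A)ᵀ) + A⁻¹ * Jmat)ᵀ = -(A⁻¹ * (-(Smat A)ᵀ) + A⁻¹ * Jmat) := by
  have hBT : (A⁻¹)ᵀ = A⁻¹ := by rw [Matrix.transpose_nonsing_inv, hAT]
  have hST : (Smat A)ᵀ = (A - 1) * (-Jmat) * A⁻¹ := by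
    rw [Smat, Matrix.transpose_mul, Matrix.transpose_mul, hBT, Jmat_transpose,
      Matrix.transpose_sub, Matrix.transpose_one, hAT, Matrix.mul_assoc]
  have hAB : A * A⁻¹ = 1 := Matrix.mul_nonsing_inv A hdet
  have hBA : A⁻¹ * A = 1 := Matrix.nonsing_inv_mul A hdet
  rw [Matrix.transpose_add, Matrix.transpose_mul, Matrix.transpose_mul, hBT,
    Matrix.transpose_neg, Matrix.transpose_transpose, Jmat_transpose, hST, Smat]
  -- goal in terms of A, A⁻¹, Jmat only
  simp only [Matrix.sub_mul, Matrix.mul_sub, Matrix.neg_mul, Matrix.mul_neg,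
    Matrix.one_mul, Matrix.mul_one, Matrix.mul_assoc, hAB, hBA,
    Matrix.mul_nonsing_inv_cancel_left A _ hdet, Matrix.nonsing_inv_mul_cancel_left A _ hdet]
  abel



/-- explicit candidate for `exp (t • N)` when `N³ = -ω²N`. -/
noncomputable def Efun (ω : ℝ) (N : Matrix (Fin 3) (Fin 3) ℝ) (t : ℝ) :
    Matrix (Fin 3) (Fin 3) ℝ :=
  1 + (Real.sin (ω * t) / ω) • N + ((1 - Real.cos (ω * t)) / ω ^ 2) • (N * N)

lemma N_mul_Efun {ω : ℝ} (hω : ω ≠ 0) {N : Matrix (Fin 3) (Fin 3) ℝ}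
    (hN : N * N * N = (-(ω ^ 2)) • N) (t : ℝ) :
    N * Efun ω N t = Real.cos (ω * t) • N + (Real.sin (ω * t) / ω) • (N * N) := by
  have h3 : N * (N * N) = (-(ω ^ 2)) • N := by rw [← Matrix.mul_assoc]; exact hN
  rw [Efun, mul_add, mul_add, mul_one, mul_smul_comm, mul_smul_comm, h3, smul_smul]
  have hc : (1 - Real.cos (ω * t)) / ω ^ 2 * (-(ω ^ 2)) = Real.cos (ω * t) - 1 := by
    field_simp
    ring
  rw [hc]
  have : (Real.cos (ω * t) - 1) • N = Real.cos (ω * t) • N - N := by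
    rw [sub_smul, one_smul]
  rw [this]
  abel

section ExpSection

attribute [local instance] Matrix.linftyOpNormedAddCommGroup Matrix.linftyOpNormedRing
  Matrix.linftyOpNormedAlgebra

lemma Efun_hasDerivAt {ω : ℝ} (hω : ω ≠ 0) (N : Matrix (Fin 3) (Fin 3) ℝ) (t : ℝ) :
    HasDerivAt (Efun ω N)
      (Real.cos (ω * t) • N + (Real.sin (ω * t) / ω) • (N * N)) t := by
  have hsin : HasDerivAt (fun u : ℝ => Real.sin (ω * u) / ω) (Real.cos (ω * t)) t := by
    have h1 : HasDerivAt (fun u : ℝ => ω * u) ω t := by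
      simpa using (hasDerivAt_id t).const_mul ω
    have h2 := (Real.hasDerivAt_sin (ω * t)).comp t h1
    have h3 := h2.div_const ω
    refine h3.congr_deriv ?_
    field_simp
  have hcos : HasDerivAt (fun u : ℝ => (1 - Real.cos (ω * u)) / ω ^ 2)
      (Real.sin (ω * t) / ω) t := by
    have h1 : HasDerivAt (fun u : ℝ => ω * u) ω t := by
      simpa using (hasDerivAt_id t).const_mul ω
    have h2 := (Real.hasDerivAt_cos (ω * t)).comp t h1
    have h3 := ((h2.const_sub 1).div_const (ω ^ 2))
    refine h3.congr_deriv ?_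
    field_simp
  have := ((hsin.smul_const N).const_add (1 : Matrix (Fin 3) (Fin 3) ℝ)).add
    (hcos.smul_const (N * N))
  exact this

lemma exp_neg_mul_Efun {ω : ℝ} (hω : ω ≠ 0) {N : Matrix (Fin 3) (Fin 3) ℝ}
    (hN : N * N * N = (-(ω ^ 2)) • N) (t : ℝ) :
    NormedSpace.exp (t • (-N)) * Efun ω N t = 1 := by
  set F : ℝ → Matrix (Fin 3) (Fin 3) ℝ :=
    fun s => NormedSpace.exp (s • (-N)) * Efun ω N s with hF
  have hFd : ∀ s : ℝ, HasDerivAt F 0 s := by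
    intro s
    have hexp : HasDerivAt (fun u : ℝ => NormedSpace.exp (u • (-N)))
        ((-N) * NormedSpace.exp (s • (-N))) s := hasDerivAt_exp_smul_const' (-N) s
    have hprod := hexp.mul (Efun_hasDerivAt hω N s)
    have hc : Commute N (NormedSpace.exp (s • (-N))) := by
      have : Commute N (s • (-N)) := ((Commute.refl N).neg_right).smul_right s
      exact this.exp_right
    have hval : (-N) * NormedSpace.exp (s • (-N)) * Efun ω N s +
        NormedSpace.exp (s • (-N)) *
          (Real.cos (ω * s) • N + (Real.sin (ω * s) / ω) • (N * N)) = 0 := by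
      rw [← N_mul_Efun hω hN s, ← Matrix.mul_assoc, ← hc.eq, Matrix.neg_mul, Matrix.neg_mul]
      abel
    rw [← hval]
    exact hprod
  have hconst : ∀ s : ℝ, F s = F 0 := by
    intro s
    exact is_const_of_deriv_eq_zero (fun x => (hFd x).differentiableAt)
      (fun x => (hFd x).deriv) s 0
  have hF0 : F 0 = 1 := by
    simp [hF, Efun, NormedSpace.exp_zero]
  rw [← hF0]; exact (hconst t)

lemma exp_eq_Efun {ω : ℝ} (hω : ω ≠ 0) {N : Matrix (Fin 3) (Fin 3) ℝ}
    (hN : N * N * N = (-(ω ^ 2)) • N) (t : ℝ) :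
    NormedSpace.exp (t • N) = Efun ω N t := by
  have h1 : NormedSpace.exp (t • (-N)) * Efun ω N t = 1 := exp_neg_mul_Efun hω hN t
  have hcomm : Commute (t • N) (t • (-N)) := by
    exact (((Commute.refl N).neg_right).smul_right t).smul_left t
  have h2 : NormedSpace.exp (t • N) * NormedSpace.exp (t • (-N)) = 1 := by
    rw [← Matrix.exp_add_of_commute _ _ hcomm]
    simp [NormedSpace.exp_zero]
  calc NormedSpace.exp (t • N)
      = NormedSpace.exp (t • N) * (NormedSpace.exp (t • (-N)) * Efun ω N t) := by
        rw [h1, mul_one]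
    _ = (NormedSpace.exp (t • N) * NormedSpace.exp (t • (-N))) * Efun ω N t := by
        rw [Matrix.mul_assoc]
    _ = Efun ω N t := by rw [h2, Matrix.one_mul]

lemma Efun_neg_mul {ω : ℝ} (hω : ω ≠ 0) {N : Matrix (Fin 3) (Fin 3) ℝ}
    (hN : N * N * N = (-(ω ^ 2)) • N) (t : ℝ) :
    Efun ω N (-t) * Efun ω N t = 1 := by
  rw [← exp_eq_Efun hω hN (-t), ← exp_eq_Efun hω hN t,
    ← Matrix.exp_add_of_commute _ _ (((Commute.refl N).smul_left (-t)).smul_right t)]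
  rw [show (-t) • N + t • N = (0 : Matrix (Fin 3) (Fin 3) ℝ) by rw [neg_smul]; abel]
  simp [NormedSpace.exp_zero]

end ExpSection

lemma Efun_mulVec {ω : ℝ} {N : Matrix (Fin 3) (Fin 3) ℝ} (t : ℝ) (v : Fin 3 → ℝ) :
    Efun ω N t *ᵥ v = v + (Real.sin (ω * t) / ω) • (N *ᵥ v)
      + ((1 - Real.cos (ω * t)) / ω ^ 2) • ((N * N) *ᵥ v) := by
  rw [Efun, Matrix.add_mulVec, Matrix.add_mulVec, Matrix.one_mulVec,
    Matrix.smul_mulVec, Matrix.smul_mulVec]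

/-- The symbol `m(x) = 2 (x · A⁻¹Jx)/(x · A⁻¹x)`. -/
noncomputable def symb (A : Matrix (Fin 3) (Fin 3) ℝ) (x : Fin 3 → ℝ) : ℝ :=
  2 * (x ⬝ᵥ (A⁻¹ * Jmat) *ᵥ x) / (x ⬝ᵥ A⁻¹ *ᵥ x)

/-- The symbol `M̃(t;ξ) := exp(∫₀ᵗ m(e^{−rSᵀ}ξ) dr)`. -/
noncomputable def symbM (A : Matrix (Fin 3) (Fin 3) ℝ) (t : ℝ) (ξ : Fin 3 → ℝ) : ℝ :=
  Real.exp (∫ r in (0:ℝ)..t, symb A (NormedSpace.exp ((-r) • (Smat A)ᵀ) *ᵥ ξ))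

/-- The Euclidean norm on `ℝ³`. -/
noncomputable def eunorm (v : Fin 3 → ℝ) : ℝ := Real.sqrt (∑ i : Fin 3, v i ^ 2)

lemma eunorm_nonneg (v : Fin 3 → ℝ) : 0 ≤ eunorm v := Real.sqrt_nonneg _

lemma eunorm_sq (v : Fin 3 → ℝ) : eunorm v ^ 2 = ∑ i : Fin 3, v i ^ 2 := by
  rw [eunorm, Real.sq_sqrt]
  positivity

lemma eunorm_eq_norm (v : Fin 3 → ℝ) :
    eunorm v = ‖(WithLp.equiv 2 (Fin 3 → ℝ)).symm v‖ := by
  rw [EuclideanSpace.norm_eq, eunorm]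
  congr 1
  refine Finset.sum_congr rfl fun i _ => ?_
  rw [Real.norm_eq_abs, sq_abs]
  rfl

lemma eunorm_pos {v : Fin 3 → ℝ} (hv : v ≠ 0) : 0 < eunorm v := by
  obtain ⟨i, hi⟩ := Function.ne_iff.mp hv
  have h1 : v i ^ 2 ≤ ∑ j : Fin 3, v j ^ 2 :=
    Finset.single_le_sum (fun j _ => sq_nonneg (v j)) (Finset.mem_univ i)
  have h2 : 0 < v i ^ 2 := lt_of_le_of_ne (sq_nonneg _) (Ne.symm (pow_ne_zero 2 hi))
  exact Real.sqrt_pos.mpr (lt_of_lt_of_le h2 h1)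

lemma abs_le_eunorm (v : Fin 3 → ℝ) (i : Fin 3) : |v i| ≤ eunorm v := by
  rw [eunorm, ← Real.sqrt_sq_eq_abs]
  apply Real.sqrt_le_sqrt
  exact Finset.single_le_sum (fun j _ => sq_nonneg (v j)) (Finset.mem_univ i)

lemma eunorm_mulVec_le {M : Matrix (Fin 3) (Fin 3) ℝ} {cM : ℝ}
    (h : ∑ i : Fin 3, ∑ j : Fin 3, |M i j| ≤ cM) (v : Fin 3 → ℝ) :
    eunorm (M *ᵥ v) ≤ 2 * cM * eunorm v := by
  have hcM : 0 ≤ cM := le_trans (by positivity) h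
  have hrow : ∀ i : Fin 3, |(M *ᵥ v) i| ≤ cM * eunorm v := by
    intro i
    have h1 : |(M *ᵥ v) i| ≤ ∑ j : Fin 3, |M i j| * |v j| := by
      rw [Matrix.mulVec, dotProduct]
      refine le_trans (Finset.abs_sum_le_sum_abs _ _) ?_
      refine Finset.sum_le_sum fun j _ => ?_
      rw [abs_mul]
    refine le_trans h1 ?_
    have h2 : ∑ j : Fin 3, |M i j| * |v j| ≤ ∑ j : Fin 3, |M i j| * eunorm v :=
      Finset.sum_le_sum fun j _ => mul_le_mul_of_nonneg_left (abs_le_eunorm v j) (abs_nonneg _)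
    refine le_trans h2 ?_
    rw [← Finset.sum_mul]
    refine mul_le_mul_of_nonneg_right ?_ (eunorm_nonneg v)
    refine le_trans ?_ h
    exact Finset.single_le_sum (f := fun i : Fin 3 => ∑ j : Fin 3, |M i j|)
      (fun k _ => Finset.sum_nonneg fun j _ => abs_nonneg _) (Finset.mem_univ i)
  have hsum : ∑ i : Fin 3, (M *ᵥ v) i ^ 2 ≤ 3 * (cM * eunorm v) ^ 2 := by
    have : ∀ i : Fin 3, (M *ᵥ v) i ^ 2 ≤ (cM * eunorm v) ^ 2 := by
      intro i
      rw [← sq_abs]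
      exact pow_le_pow_left₀ (abs_nonneg _) (hrow i) 2
    calc ∑ i : Fin 3, (M *ᵥ v) i ^ 2 ≤ ∑ _i : Fin 3, (cM * eunorm v) ^ 2 :=
          Finset.sum_le_sum fun i _ => this i
      _ = 3 * (cM * eunorm v) ^ 2 := by rw [Fin.sum_univ_three]; ring
  rw [eunorm]
  have h4 : (0:ℝ) ≤ 2 * cM * eunorm v :=
    mul_nonneg (mul_nonneg (by norm_num) hcM) (eunorm_nonneg v)
  rw [show (2 * cM * eunorm v) = Real.sqrt ((2 * cM * eunorm v) ^ 2) from
    (Real.sqrt_sq h4).symm]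
  apply Real.sqrt_le_sqrt
  nlinarith [sq_nonneg (cM * eunorm v)]

lemma eunorm_smul (c : ℝ) (v : Fin 3 → ℝ) : eunorm (c • v) = |c| * eunorm v := by
  rw [eunorm, eunorm]
  have : ∑ i : Fin 3, (c • v) i ^ 2 = c ^ 2 * ∑ i : Fin 3, v i ^ 2 := by
    rw [Finset.mul_sum]
    refine Finset.sum_congr rfl fun i _ => ?_
    simp [Pi.smul_apply, smul_eq_mul]; ring
  rw [this, Real.sqrt_mul (sq_nonneg c), Real.sqrt_sq_eq_abs]

/-- positive definite quadratic form lower bound -/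
lemma posdef_lower (B : Matrix (Fin 3) (Fin 3) ℝ) (hB : B.PosDef) :
    ∃ ε : ℝ, 0 < ε ∧ ∀ v : Fin 3 → ℝ, ε * eunorm v ^ 2 ≤ v ⬝ᵥ B *ᵥ v := by
  have hq : ∀ x : Fin 3 → ℝ, x ≠ 0 → 0 < x ⬝ᵥ B *ᵥ x := by
    intro x hx
    simpa [star_trivial] using hB.dotProduct_mulVec_pos hx
  set q : EuclideanSpace ℝ (Fin 3) → ℝ :=
    fun x => (WithLp.equiv 2 (Fin 3 → ℝ) x) ⬝ᵥ B *ᵥ (WithLp.equiv 2 (Fin 3 → ℝ) x) with hqdef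
  have hcont : Continuous q := by
    have h1 : Continuous fun x : EuclideanSpace ℝ (Fin 3) => (WithLp.equiv 2 (Fin 3 → ℝ) x) :=
      PiLp.continuous_ofLp 2 (fun _ : Fin 3 => ℝ)
    have h2 : Continuous fun y : Fin 3 → ℝ => y ⬝ᵥ B *ᵥ y := by
      simp only [dotProduct, Matrix.mulVec]
      exact continuous_finset_sum _ fun i _ =>
        ((continuous_apply i).mul (continuous_finset_sum _ fun j _ =>
          (continuous_const.mul (continuous_apply j))))
    exact h2.comp h1
  have hsph : IsCompact (Metric.sphere (0 : EuclideanSpace ℝ (Fin 3)) 1) :=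
    isCompact_sphere 0 1
  have hne : (Metric.sphere (0 : EuclideanSpace ℝ (Fin 3)) 1).Nonempty :=
    NormedSpace.sphere_nonempty.mpr zero_le_one
  obtain ⟨x₀, hx₀mem, hmin⟩ := hsph.exists_isMinOn hne hcont.continuousOn
  have hx₀ : (WithLp.equiv 2 (Fin 3 → ℝ) x₀) ≠ 0 := by
    intro hzero
    have : x₀ = 0 := by
      apply (WithLp.equiv 2 (Fin 3 → ℝ)).injective
      simpa using hzero
    rw [this] at hx₀mem
    simp at hx₀mem
  refine ⟨q x₀, hq _ hx₀, fun v => ?_⟩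
  rcases eq_or_ne v 0 with rfl | hv
  · simp [eunorm]
  · have hn : 0 < eunorm v := eunorm_pos hv
    set w : Fin 3 → ℝ := (eunorm v)⁻¹ • v with hw
    have hwnorm : eunorm w = 1 := by
      rw [hw, eunorm_smul, abs_of_pos (by positivity)]
      field_simp
    have hwmem : (WithLp.equiv 2 (Fin 3 → ℝ)).symm w ∈
        Metric.sphere (0 : EuclideanSpace ℝ (Fin 3)) 1 := by
      simp only [Metric.mem_sphere, dist_zero_right]
      rw [← eunorm_eq_norm, hwnorm]
    have hql := hmin hwmem
    have hqw : q ((WithLp.equiv 2 (Fin 3 → ℝ)).symm w) = w ⬝ᵥ B *ᵥ w := by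
      simp [hqdef]
    have hscale : w ⬝ᵥ B *ᵥ w = ((eunorm v)⁻¹) ^ 2 * (v ⬝ᵥ B *ᵥ v) := by
      rw [hw, smul_dotProduct, Matrix.mulVec_smul, dotProduct_smul]
      simp [smul_eq_mul]; ring
    have : q x₀ ≤ ((eunorm v)⁻¹) ^ 2 * (v ⬝ᵥ B *ᵥ v) := by
      rw [← hscale, ← hqw]; exact hql
    have h5 : q x₀ * eunorm v ^ 2 ≤ v ⬝ᵥ B *ᵥ v := by
      have := mul_le_mul_of_nonneg_right this (le_of_lt (by positivity : (0:ℝ) < eunorm v ^ 2))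
      calc q x₀ * eunorm v ^ 2 ≤ ((eunorm v)⁻¹) ^ 2 * (v ⬝ᵥ B *ᵥ v) * eunorm v ^ 2 := this
        _ = v ⬝ᵥ B *ᵥ v := by field_simp
    exact h5

lemma skew_quad {M : Matrix (Fin 3) (Fin 3) ℝ} (h : Mᵀ = -M) (v : Fin 3 → ℝ) :
    v ⬝ᵥ M *ᵥ v = 0 := by
  have h1 : v ⬝ᵥ M *ᵥ v = (Mᵀ *ᵥ v) ⬝ᵥ v := by
    rw [Matrix.mulVec_transpose, dotProduct_mulVec]
  rw [h] at h1
  have h2 : ((-M) *ᵥ v) ⬝ᵥ v = -(v ⬝ᵥ M *ᵥ v) := by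
    rw [Matrix.neg_mulVec, neg_dotProduct, dotProduct_comm]
  rw [h2] at h1
  linarith

set_option maxHeartbeats 1000000 in
/-- in the elliptic case `μ_A < 0`, every plane-wave solution of the
linearised semi-geostrophic equation is bounded:
`|a₀ M̃(t;k₀)|·|e^{−tSᵀ}k₀| ≤ C` for all `t`. Hence `P̄(x) = ½x·Ax` is stable to
plane-wave perturbations. -/
theorem elliptic_stability (a b c d e f : ℝ) (A : Matrix (Fin 3) (Fin 3) ℝ)
    (hA : A = !![a, b, c; b, d, e; c, e, f]) (hApd : A.PosDef)
    (μ : ℝ) (hμ : μ = a * f - c ^ 2 + d * f - e ^ 2 - f - A.det) (hμneg : μ < 0) :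
    ∀ a₀ : ℝ, ∀ k₀ : Fin 3 → ℝ, k₀ ≠ 0 →
      ∃ C : ℝ, ∀ t : ℝ,
        |a₀ * symbM A t k₀| * eunorm (NormedSpace.exp ((-t) • (Smat A)ᵀ) *ᵥ k₀) ≤ C := by
  intro a₀ k₀ hk₀
  -- basic facts about A
  have hdetpos : 0 < A.det := hApd.det_pos
  have hdetne : A.det ≠ 0 := hdetpos.ne'
  have hdetU : IsUnit A.det := hdetne.isUnit
  have hAT : Aᵀ = A := by
    rw [hA]; ext i j; fin_cases i <;> fin_cases j <;> simp [Matrix.transpose_apply]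
  set B : Matrix (Fin 3) (Fin 3) ℝ := A⁻¹ with hBdef
  have hBpd : B.PosDef := hApd.inv
  have hBT : Bᵀ = B := by rw [hBdef, Matrix.transpose_nonsing_inv, hAT]
  -- frequency
  set ω2 : ℝ := -μ / A.det with hω2def
  have hω2pos : 0 < ω2 := div_pos (neg_pos.mpr hμneg) hdetpos
  set ω : ℝ := Real.sqrt ω2 with hωdef
  have hωpos : 0 < ω := Real.sqrt_pos.mpr hω2pos
  have hωne : ω ≠ 0 := hωpos.ne'
  have hωsq : ω ^ 2 = ω2 := Real.sq_sqrt hω2pos.le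
  set N : Matrix (Fin 3) (Fin 3) ℝ := -(Smat A)ᵀ with hNdef
  have hNc : N * N * N = (-(ω ^ 2)) • N := by
    rw [hωsq, hω2def, neg_div, neg_neg]
    exact Ncube a b c d e f μ A hA hdetne hμ
  -- exponential formula
  have hexp : ∀ t : ℝ, NormedSpace.exp ((-t) • (Smat A)ᵀ) = Efun ω N t := by
    intro t
    have h1 : (-t) • (Smat A)ᵀ = t • N := by
      rw [hNdef, smul_neg, neg_smul]
    rw [h1, exp_eq_Efun hωne hNc t]
  set k : ℝ → Fin 3 → ℝ := fun t => Efun ω N t *ᵥ k₀ with hkdef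
  have hkapp : ∀ s : ℝ, k s = Efun ω N s *ᵥ k₀ := fun s => rfl
  set u : Fin 3 → ℝ := N *ᵥ k₀ with hudef
  set w : Fin 3 → ℝ := (N * N) *ᵥ k₀ with hwdef
  have hkt : ∀ t, k t = k₀ + (Real.sin (ω * t) / ω) • u
      + ((1 - Real.cos (ω * t)) / ω ^ 2) • w := fun t => Efun_mulVec t k₀
  have hNk : ∀ t, N *ᵥ k t = Real.cos (ω * t) • u + (Real.sin (ω * t) / ω) • w := by
    intro t
    rw [hkapp t, Matrix.mulVec_mulVec, N_mul_Efun hωne hNc t, Matrix.add_mulVec,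
      Matrix.smul_mulVec, Matrix.smul_mulVec]
  -- derivatives of components
  have hsin : ∀ s : ℝ, HasDerivAt (fun r : ℝ => Real.sin (ω * r) / ω) (Real.cos (ω * s)) s := by
    intro s
    have h1 : HasDerivAt (fun r : ℝ => ω * r) ω s := by simpa using (hasDerivAt_id s).const_mul ω
    have h3 := ((Real.hasDerivAt_sin (ω * s)).comp s h1).div_const ω
    refine h3.congr_deriv ?_
    field_simp
  have hcos : ∀ s : ℝ, HasDerivAt (fun r : ℝ => (1 - Real.cos (ω * r)) / ω ^ 2)
      (Real.sin (ω * s) / ω) s := by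
    intro s
    have h1 : HasDerivAt (fun r : ℝ => ω * r) ω s := by simpa using (hasDerivAt_id s).const_mul ω
    have h3 := (((Real.hasDerivAt_cos (ω * s)).comp s h1).const_sub 1).div_const (ω ^ 2)
    refine h3.congr_deriv ?_
    field_simp
  have hki : ∀ (t : ℝ) (i : Fin 3), HasDerivAt (fun s => k s i) ((N *ᵥ k t) i) t := by
    intro t i
    have heq : (fun s => k s i)
        = fun s => k₀ i + ((Real.sin (ω * s) / ω) * u i
          + ((1 - Real.cos (ω * s)) / ω ^ 2) * w i) := by
      funext s
      rw [hkt s]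
      simp [Pi.add_apply, Pi.smul_apply, smul_eq_mul, add_assoc]
    rw [heq, hNk t]
    exact (((hsin t).mul_const (u i)).add ((hcos t).mul_const (w i))).const_add (k₀ i)
  -- the quadratic form along the flow
  set g : ℝ → ℝ := fun t => ∑ i : Fin 3, ∑ j : Fin 3, k t i * B i j * k t j with hgdef
  have hdd : ∀ (C : Matrix (Fin 3) (Fin 3) ℝ) (x y : Fin 3 → ℝ),
      x ⬝ᵥ C *ᵥ y = ∑ i : Fin 3, ∑ j : Fin 3, x i * C i j * y j := by
    intro C x y
    simp [dotProduct, Matrix.mulVec, Finset.mul_sum, mul_assoc]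
  have hgq : ∀ t, g t = k t ⬝ᵥ B *ᵥ k t := by
    intro t; rw [hgdef, hdd]
  -- skew identity ⇒ quadratic identity
  have hsk : (B * N + B * Jmat)ᵀ = -(B * N + B * Jmat) := skew_key A hAT hdetU
  have hquad : ∀ v : Fin 3 → ℝ,
      (N *ᵥ v) ⬝ᵥ B *ᵥ v + v ⬝ᵥ B *ᵥ (N *ᵥ v) = -2 * (v ⬝ᵥ (B * Jmat) *ᵥ v) := by
    intro v
    have e1 : (N *ᵥ v) ⬝ᵥ B *ᵥ v = v ⬝ᵥ (B * N) *ᵥ v := by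
      rw [dotProduct_mulVec, ← Matrix.mulVec_transpose, hBT,
        Matrix.mulVec_mulVec, dotProduct_comm]
    have e2 : v ⬝ᵥ B *ᵥ (N *ᵥ v) = v ⬝ᵥ (B * N) *ᵥ v := by
      rw [Matrix.mulVec_mulVec]
    have e3 : v ⬝ᵥ (B * N) *ᵥ v + v ⬝ᵥ (B * Jmat) *ᵥ v = 0 := by
      have := skew_quad hsk v
      rw [Matrix.add_mulVec, dotProduct_add] at this
      exact this
    rw [e1, e2]
    linarith
  -- derivative of g
  have hg' : ∀ t, HasDerivAt g
      ((N *ᵥ k t) ⬝ᵥ B *ᵥ k t + k t ⬝ᵥ B *ᵥ (N *ᵥ k t)) t := by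
    intro t
    have hval : (N *ᵥ k t) ⬝ᵥ B *ᵥ k t + k t ⬝ᵥ B *ᵥ (N *ᵥ k t)
        = ∑ i : Fin 3, ∑ j : Fin 3,
          ((N *ᵥ k t) i * B i j * k t j + k t i * B i j * (N *ᵥ k t) j) := by
      rw [hdd, hdd, ← Finset.sum_add_distrib]
      exact Finset.sum_congr rfl fun i _ => by rw [← Finset.sum_add_distrib]
    rw [hval]
    apply HasDerivAt.fun_sum
    intro i _
    apply HasDerivAt.fun_sum
    intro j _
    exact ((hki t i).mul_const (B i j)).mul (hki t j)
  -- lower bound on ‖k t‖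
  set cN : ℝ := ∑ i : Fin 3, ∑ j : Fin 3, |N i j| with hcNdef
  set cN2 : ℝ := ∑ i : Fin 3, ∑ j : Fin 3, |(N * N) i j| with hcN2def
  have hcNnn : 0 ≤ cN := Finset.sum_nonneg fun i _ => Finset.sum_nonneg fun j _ => abs_nonneg _
  have hcN2nn : 0 ≤ cN2 := Finset.sum_nonneg fun i _ => Finset.sum_nonneg fun j _ => abs_nonneg _
  set c0 : ℝ := 3 + (1 / ω) * cN + (2 / ω ^ 2) * cN2 with hc0def
  have hc0pos : 0 < c0 := by
    have h1 : 0 ≤ (1 / ω) * cN := mul_nonneg (by positivity) hcNnn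
    have h2 : 0 ≤ (2 / ω ^ 2) * cN2 := mul_nonneg (by positivity) hcN2nn
    rw [hc0def]; linarith
  have hEsum : ∀ t : ℝ, ∑ i : Fin 3, ∑ j : Fin 3, |Efun ω N t i j| ≤ c0 := by
    intro t
    have hentry : ∀ i j : Fin 3, |Efun ω N t i j|
        ≤ |(1 : Matrix (Fin 3) (Fin 3) ℝ) i j| + (1 / ω) * |N i j|
          + (2 / ω ^ 2) * |(N * N) i j| := by
      intro i j
      have h0 : Efun ω N t i j = (1 : Matrix (Fin 3) (Fin 3) ℝ) i j
          + (Real.sin (ω * t) / ω) * N i j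
          + ((1 - Real.cos (ω * t)) / ω ^ 2) * (N * N) i j := by
        rw [Efun]
        simp [Matrix.add_apply, Matrix.smul_apply, smul_eq_mul]
      rw [h0]
      refine le_trans (abs_add_le _ _) ?_
      have h1 : |(1 : Matrix (Fin 3) (Fin 3) ℝ) i j + (Real.sin (ω * t) / ω) * N i j|
          ≤ |(1 : Matrix (Fin 3) (Fin 3) ℝ) i j| + |(Real.sin (ω * t) / ω) * N i j| :=
        abs_add_le _ _
      have h2 : |(Real.sin (ω * t) / ω) * N i j| ≤ (1 / ω) * |N i j| := by
        rw [abs_mul]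
        refine mul_le_mul_of_nonneg_right ?_ (abs_nonneg _)
        rw [abs_div, abs_of_pos hωpos]
        exact div_le_div_of_nonneg_right
          (abs_le.mpr ⟨Real.neg_one_le_sin _, Real.sin_le_one _⟩) hωpos.le
      have h3 : |((1 - Real.cos (ω * t)) / ω ^ 2) * (N * N) i j|
          ≤ (2 / ω ^ 2) * |(N * N) i j| := by
        rw [abs_mul]
        refine mul_le_mul_of_nonneg_right ?_ (abs_nonneg _)
        rw [abs_div, abs_of_pos (by positivity : (0:ℝ) < ω ^ 2)]
        refine div_le_div_of_nonneg_right ?_ (by positivity)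
        have hc1 := Real.cos_le_one (ω * t)
        have hc2 := Real.neg_one_le_cos (ω * t)
        rw [abs_le]; constructor <;> nlinarith
      linarith [h1, h2, h3]
    calc ∑ i : Fin 3, ∑ j : Fin 3, |Efun ω N t i j|
        ≤ ∑ i : Fin 3, ∑ j : Fin 3, (|(1 : Matrix (Fin 3) (Fin 3) ℝ) i j|
            + (1 / ω) * |N i j| + (2 / ω ^ 2) * |(N * N) i j|) :=
          Finset.sum_le_sum fun i _ => Finset.sum_le_sum fun j _ => hentry i j
      _ = c0 := by
          rw [hc0def, hcNdef, hcN2def]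
          simp only [Finset.sum_add_distrib, Finset.mul_sum]
          have hone : ∑ i : Fin 3, ∑ j : Fin 3, |(1 : Matrix (Fin 3) (Fin 3) ℝ) i j|
              = 3 := by
            rw [Fin.sum_univ_three, Fin.sum_univ_three, Fin.sum_univ_three, Fin.sum_univ_three]
            norm_num [Matrix.one_apply, Fin.ext_iff]
          rw [hone]
  have hEinv : ∀ t : ℝ, Efun ω N (-t) * Efun ω N t = 1 := fun t => Efun_neg_mul hωne hNc t
  have hlowk : ∀ t : ℝ, eunorm k₀ ≤ 2 * c0 * eunorm (k t) := by
    intro t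
    have hs : k₀ = Efun ω N (-t) *ᵥ k t := by
      rw [hkapp t, Matrix.mulVec_mulVec, hEinv t, Matrix.one_mulVec]
    calc eunorm k₀ = eunorm (Efun ω N (-t) *ᵥ k t) := by rw [← hs]
      _ ≤ 2 * c0 * eunorm (k t) := eunorm_mulVec_le (hEsum (-t)) (k t)
  have hk0pos : 0 < eunorm k₀ := eunorm_pos hk₀
  set r : ℝ := eunorm k₀ / (2 * c0) with hrdef
  have hrpos : 0 < r := div_pos hk0pos (by linarith)
  have hklow : ∀ t, r ≤ eunorm (k t) := by
    intro t
    rw [hrdef, div_le_iff₀ (by linarith : (0:ℝ) < 2 * c0)]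
    calc eunorm k₀ ≤ 2 * c0 * eunorm (k t) := hlowk t
      _ = eunorm (k t) * (2 * c0) := by ring
  have hkne : ∀ t, k t ≠ 0 := by
    intro t h0
    have h1 := hklow t
    rw [h0] at h1
    have : eunorm (0 : Fin 3 → ℝ) = 0 := by simp [eunorm]
    rw [this] at h1
    linarith
  have hgpos : ∀ t, 0 < g t := by
    intro t
    rw [hgq t]
    simpa [star_trivial] using hBpd.dotProduct_mulVec_pos (hkne t)
  -- continuity of the symbol along the flow
  have hkc : ∀ i : Fin 3, Continuous fun t => k t i := by
    intro i
    have heq : (fun t => k t i)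
        = fun t => k₀ i + ((Real.sin (ω * t) / ω) * u i
          + ((1 - Real.cos (ω * t)) / ω ^ 2) * w i) := by
      funext s
      rw [hkt s]
      simp [Pi.add_apply, Pi.smul_apply, smul_eq_mul, add_assoc]
    rw [heq]
    fun_prop
  have hgc : Continuous g := by
    rw [hgdef]
    exact continuous_finset_sum _ fun i _ => continuous_finset_sum _ fun j _ =>
      (((hkc i).mul continuous_const).mul (hkc j))
  have hnumc : Continuous fun t => k t ⬝ᵥ (B * Jmat) *ᵥ k t := by
    have heq : (fun t => k t ⬝ᵥ (B * Jmat) *ᵥ k t)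
        = fun t => ∑ i : Fin 3, ∑ j : Fin 3, k t i * (B * Jmat) i j * k t j := by
      funext t; rw [hdd]
    rw [heq]
    exact continuous_finset_sum _ fun i _ => continuous_finset_sum _ fun j _ =>
      (((hkc i).mul continuous_const).mul (hkc j))
  have hmsc : Continuous fun t => symb A (k t) := by
    have heq : (fun t => symb A (k t))
        = fun t => 2 * (k t ⬝ᵥ (B * Jmat) *ᵥ k t) / g t := by
      funext t
      rw [symb, hgq t, hBdef]
    rw [heq]
    exact (continuous_const.mul hnumc).div hgc fun t => (hgpos t).ne'
  -- FTC
  have hlog : ∀ s : ℝ, HasDerivAt (fun x => -Real.log (g x)) (symb A (k s)) s := by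
    intro s
    have h1 := ((hg' s).log (hgpos s).ne').neg
    have h2 : -(((N *ᵥ k s) ⬝ᵥ B *ᵥ k s + k s ⬝ᵥ B *ᵥ (N *ᵥ k s)) / g s)
        = symb A (k s) := by
      rw [hquad (k s), symb, ← hBdef, ← hgq s]
      ring
    rw [← h2]
    exact h1
  have hInt : ∀ t : ℝ, (∫ s in (0:ℝ)..t, symb A (k s))
      = -Real.log (g t) - (-Real.log (g 0)) := by
    intro t
    exact intervalIntegral.integral_eq_sub_of_hasDerivAt (fun s _ => hlog s)
      (hmsc.intervalIntegrable 0 t)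
  have hsymbM : ∀ t : ℝ, symbM A t k₀ = g 0 / g t := by
    intro t
    have hrewrite : ∀ s : ℝ,
        symb A (NormedSpace.exp ((-s) • (Smat A)ᵀ) *ᵥ k₀) = symb A (k s) := by
      intro s; rw [hexp s]
    rw [symbM]
    simp only [hrewrite]
    rw [hInt t]
    rw [show -Real.log (g t) - -Real.log (g 0) = Real.log (g 0) - Real.log (g t) by ring]
    rw [Real.exp_sub, Real.exp_log (hgpos 0), Real.exp_log (hgpos t)]
  -- quadratic form lower bound
  obtain ⟨ε, hε, hεq⟩ := posdef_lower B hBpd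
  -- conclusion
  refine ⟨|a₀| * (g 0 / (ε * r)), fun t => ?_⟩
  have hgoal1 : NormedSpace.exp ((-t) • (Smat A)ᵀ) *ᵥ k₀ = k t := by
    rw [hexp t]
  rw [hgoal1]
  have hsMpos : 0 < symbM A t k₀ := by rw [symbM]; exact Real.exp_pos _
  rw [abs_mul, abs_of_pos hsMpos, hsymbM t]
  have hgt := hgpos t
  have hg0 := hgpos 0
  have key : g 0 / g t * eunorm (k t) ≤ g 0 / (ε * r) := by
    rw [div_mul_eq_mul_div, div_le_div_iff₀ hgt (by positivity)]
    have h1 : ε * eunorm (k t) ^ 2 ≤ g t := by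
      rw [hgq t]; exact hεq (k t)
    have h2 : r ≤ eunorm (k t) := hklow t
    nlinarith [eunorm_nonneg (k t), mul_le_mul_of_nonneg_left h2
      (mul_nonneg hε.le (eunorm_nonneg (k t)))]
  calc |a₀| * (g 0 / g t) * eunorm (k t)
      = |a₀| * (g 0 / g t * eunorm (k t)) := by ring
    _ ≤ |a₀| * (g 0 / (ε * r)) := mul_le_mul_of_nonneg_left key (abs_nonneg _)
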